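/- There exists a constant C > 0 such that for every real β ≥ 1 and every t ≥ 0, the solutions A₀(·;β) and A₁(·;β) of the ODE u'' + u' + β²u = 0 on [0,∞) with initial data (u(0),u'(0)) = (1,0) and (0,1), respectively, satisfy |A₀(t;β)| ≤ C·e^{−t/2} and |A₁(t;β)| ≤ C·β^{−1}·e^{−t/2}. -/

import Mathlib

open Set

/-- Energy identity: `e^t * F(t) = F(0)` where `F = u'^2 + u u' + β² u²`. -/
lemma energy_const (β : ℝ) (u u' u'' : ℝ → ℝ)
    (hu : ∀ t ∈ Set.Ici (0 : ℝ), HasDerivWithinAt u (u' t) (Set.Ici 0) t)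
    (hu' : ∀ t ∈ Set.Ici (0 : ℝ), HasDerivWithinAt u' (u'' t) (Set.Ici 0) t)
    (heq : ∀ t ∈ Set.Ici (0 : ℝ), u'' t + u' t + β^2 * u t = 0)
    (t : ℝ) (ht : 0 ≤ t) :
    Real.exp t * ((u' t)^2 + u t * u' t + β^2 * (u t)^2)
      = (u' 0)^2 + u 0 * u' 0 + β^2 * (u 0)^2 := by
  set g : ℝ → ℝ := fun s => Real.exp s * ((u' s)^2 + u s * u' s + β^2 * (u s)^2) with hg
  have hF : ∀ x ∈ Set.Ici (0:ℝ), HasDerivWithinAt g 0 (Set.Ici 0) x := by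
    intro x hx
    have h1 := hu x hx
    have h2 := hu' x hx
    have hd := ((h2.pow 2).add (h1.mul h2)).add ((h1.pow 2).const_mul (β^2))
    have he : HasDerivWithinAt Real.exp (Real.exp x) (Set.Ici 0) x := (Real.hasDerivAt_exp x).hasDerivWithinAt
    have := he.mul hd
    have hzero := heq x hx
    refine this.congr_deriv ?_
    have h3 : u'' x = -(u' x) - β^2 * u x := by linarith
    rw [h3]; push_cast; simp only [Pi.add_apply, Pi.mul_apply, Pi.pow_apply]; ring
  have hcont : ContinuousOn g (Set.Icc 0 t) := fun x hx =>
    ((hF x hx.1).continuousWithinAt).mono (fun y hy => hy.1)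
  have := constant_of_has_deriv_right_zero hcont (fun x hx =>
    (hF x hx.1).mono (Set.Ici_subset_Ici.mpr hx.1)) t ⟨ht, le_refl t⟩
  simpa [hg, Real.exp_zero] using this

/-- From the energy identity, the pointwise bound `(u t)² ≤ (4/(3β²)) F(0) e^{-t}`. -/
lemma pointwise_bound (β : ℝ) (hβ : 1 ≤ β) (u u' u'' : ℝ → ℝ)
    (hu : ∀ t ∈ Set.Ici (0 : ℝ), HasDerivWithinAt u (u' t) (Set.Ici 0) t)
    (hu' : ∀ t ∈ Set.Ici (0 : ℝ), HasDerivWithinAt u' (u'' t) (Set.Ici 0) t)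
    (heq : ∀ t ∈ Set.Ici (0 : ℝ), u'' t + u' t + β^2 * u t = 0)
    (t : ℝ) (ht : 0 ≤ t) :
    (β^2 - 1/4) * (u t)^2 ≤ Real.exp (-t) * ((u' 0)^2 + u 0 * u' 0 + β^2 * (u 0)^2) := by
  have hE := energy_const β u u' u'' hu hu' heq t ht
  have hexp : Real.exp (-t) * Real.exp t = 1 := by
    rw [← Real.exp_add]; simp
  have hF : (u' t)^2 + u t * u' t + β^2 * (u t)^2
      = Real.exp (-t) * ((u' 0)^2 + u 0 * u' 0 + β^2 * (u 0)^2) := by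
    rw [← hE, ← mul_assoc, hexp, one_mul]
  nlinarith [sq_nonneg (u' t + u t / 2)]

theorem stmt_6 :
    ∃ C : ℝ, 0 < C ∧
      ∀ β : ℝ, 1 ≤ β →
      ∀ A₀ A₀' A₀'' A₁ A₁' A₁'' : ℝ → ℝ,
      (∀ t ∈ Set.Ici (0 : ℝ), HasDerivWithinAt A₀ (A₀' t) (Set.Ici 0) t) →
      (∀ t ∈ Set.Ici (0 : ℝ), HasDerivWithinAt A₀' (A₀'' t) (Set.Ici 0) t) →
      (∀ t ∈ Set.Ici (0 : ℝ), A₀'' t + A₀' t + β^2 * A₀ t = 0) →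
      A₀ 0 = 1 → A₀' 0 = 0 →
      (∀ t ∈ Set.Ici (0 : ℝ), HasDerivWithinAt A₁ (A₁' t) (Set.Ici 0) t) →
      (∀ t ∈ Set.Ici (0 : ℝ), HasDerivWithinAt A₁' (A₁'' t) (Set.Ici 0) t) →
      (∀ t ∈ Set.Ici (0 : ℝ), A₁'' t + A₁' t + β^2 * A₁ t = 0) →
      A₁ 0 = 0 → A₁' 0 = 1 →
      ∀ t : ℝ, 0 ≤ t →
        |A₀ t| ≤ C * Real.exp (-t/2) ∧
        |A₁ t| ≤ C * β⁻¹ * Real.exp (-t/2) := by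
  refine ⟨2, by norm_num, ?_⟩
  intro β hβ A₀ A₀' A₀'' A₁ A₁' A₁'' h0 h0' heq0 hA0 hA0' h1 h1' heq1 hA1 hA1' t ht
  have hβ0 : (0:ℝ) < β := lt_of_lt_of_le one_pos hβ
  have hexp : (Real.exp (-t/2))^2 = Real.exp (-t) := by
    rw [sq, ← Real.exp_add]; ring_nf
  have hepos : 0 < Real.exp (-t) := Real.exp_pos _
  have habs : ∀ a b : ℝ, 0 ≤ b → a^2 ≤ b^2 → |a| ≤ b := by
    intro a b hb hab
    have := Real.sqrt_le_sqrt hab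
    rwa [Real.sqrt_sq_eq_abs, Real.sqrt_sq hb] at this
  constructor
  · have hb := pointwise_bound β hβ A₀ A₀' A₀'' h0 h0' heq0 t ht
    rw [hA0, hA0'] at hb
    refine habs _ _ (by positivity) ?_
    have : (2 * Real.exp (-t/2))^2 = 4 * Real.exp (-t) := by rw [mul_pow, hexp]; ring
    rw [this]
    have hq : (1:ℝ) ≤ β^2 := by nlinarith
    nlinarith [hb, hepos.le, hq]
  · have hb := pointwise_bound β hβ A₁ A₁' A₁'' h1 h1' heq1 t ht
    rw [hA1, hA1'] at hb
    refine habs _ _ (by positivity) ?_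
    have h2 : (2 * β⁻¹ * Real.exp (-t/2))^2 = 4 * β⁻¹^2 * Real.exp (-t) := by
      rw [mul_pow, mul_pow, hexp]; ring
    rw [h2]
    have hβi : β⁻¹^2 * β^2 = 1 := by field_simp
    have hq : (1:ℝ) ≤ β^2 := by nlinarith
    have key : β^2 * A₁ t ^ 2 ≤ 4 * Real.exp (-t) := by
      nlinarith [hb, hepos.le, hq, sq_nonneg (A₁ t)]
    have key2 : β⁻¹^2 * (β^2 * A₁ t ^ 2) ≤ β⁻¹^2 * (4 * Real.exp (-t)) :=
      mul_le_mul_of_nonneg_left key (by positivity)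
    rw [← mul_assoc, hβi, one_mul] at key2
    linarith
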